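/- arXiv:1206.6145 — 7 statements merged into one kernel-verified Lean document; each statement's English description precedes it below -/
import Mathlib

section
/- Let N1, N3 be positive reals with N1 ≤ N3, P2 ≥ 0, and α ∈ [0,1]. Then (1/2)·log₂(1 + (α·P2/N1)·((N1+N3)/N3)) − (1/2)·log₂(1 + α·P2/N1) ≤ 1/2. -/
theorem bc_adaptation_gap (N1 N3 P2 a : ℝ) (hN1 : 0 < N1) (hN3 : 0 < N3)
    (hN : N1 ≤ N3) (hP : 0 ≤ P2) (ha0 : 0 ≤ a) (ha1 : a ≤ 1) :
    (1/2) * Real.logb 2 (1 + (a * P2 / N1) * ((N1 + N3) / N3))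
      - (1/2) * Real.logb 2 (1 + a * P2 / N1) ≤ 1/2 := by
  set x := a * P2 / N1 with hx
  have hx0 : 0 ≤ x := by positivity
  have hB : (1:ℝ) ≤ 1 + x := by linarith
  have hratio : (N1 + N3) / N3 ≤ 2 := by
    rw [div_le_iff₀ hN3]; linarith
  have hA : 1 + x * ((N1 + N3) / N3) ≤ 2 * (1 + x) := by
    have : x * ((N1 + N3) / N3) ≤ x * 2 := by
      apply mul_le_mul_of_nonneg_left hratio hx0
    linarith
  have h1 : Real.logb 2 (1 + x * ((N1 + N3) / N3)) ≤ Real.logb 2 (2 * (1 + x)) := by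
    exact Real.logb_le_logb_of_le (by norm_num) (by positivity) hA
  have h2 : Real.logb 2 (2 * (1 + x)) = 1 + Real.logb 2 (1 + x) := by
    rw [Real.logb_mul (by norm_num) (by linarith), Real.logb_self_eq_one (by norm_num)]
  linarith
end

section
/- Let SNR, INR be nonnegative reals with SNR ≤ INR (strong interference). Then (1/2)·log₂(1 + SNR + INR + 2√(SNR·INR)) + (1/2)·log₂(1 + SNR/(1+INR)) − (1/2)·log₂(1 + SNR + INR) ≤ 1. -/
theorem strong_interference_gap (SNR INR : ℝ) (hS : 0 ≤ SNR) (hI : 0 ≤ INR)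
    (hstrong : SNR ≤ INR) :
    (1/2) * Real.logb 2 (1 + SNR + INR + 2 * Real.sqrt (SNR * INR))
      + (1/2) * Real.logb 2 (1 + SNR / (1 + INR))
      - (1/2) * Real.logb 2 (1 + SNR + INR) ≤ 1 := by
  set t := Real.sqrt (SNR * INR) with ht
  have ht0 : 0 ≤ t := Real.sqrt_nonneg _
  have ht2 : t ^ 2 = SNR * INR := Real.sq_sqrt (mul_nonneg hS hI)
  have h2t : 2 * t ≤ SNR + INR := by nlinarith [sq_nonneg (SNR - INR)]
  have hC : (0:ℝ) < 1 + SNR + INR := by linarith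
  have hIpos : (0:ℝ) < 1 + INR := by linarith
  have hB1 : SNR / (1 + INR) ≤ 1 := by
    rw [div_le_one hIpos]; linarith
  have hBnn : 0 ≤ SNR / (1 + INR) := div_nonneg hS (le_of_lt hIpos)
  have hlogB : Real.logb 2 (1 + SNR / (1 + INR)) ≤ 1 := by
    have h := Real.logb_le_logb_of_le (b := 2) (by norm_num) (by positivity)
      (show 1 + SNR / (1 + INR) ≤ 2 by linarith)
    simpa [Real.logb_self_eq_one (by norm_num : (1:ℝ) < 2)] using h
  have hlogA : Real.logb 2 (1 + SNR + INR + 2 * t)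
      ≤ 1 + Real.logb 2 (1 + SNR + INR) := by
    have h : 1 + SNR + INR + 2 * t ≤ 2 * (1 + SNR + INR) := by linarith
    have h1 := Real.logb_le_logb_of_le (b := 2) (by norm_num) (by linarith) h
    rwa [Real.logb_mul (by norm_num) (ne_of_gt hC),
      Real.logb_self_eq_one (by norm_num : (1:ℝ) < 2)] at h1
  linarith
end

section
/- Let SNR, INR be nonnegative reals with INR ≥ 1. Then (1/2)·log₂(1 + SNR + INR + 2√(SNR·INR)) + (1/2)·log₂(1 + SNR/(1+INR)) − [(1/2)·log₂(1 + INR + SNR) + (1/2)·log₂(2 + SNR/INR) − 1] ≤ 3/2. -/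
theorem weak_interference_gap_HK1 (SNR INR : ℝ) (hS : 0 ≤ SNR) (hI : 1 ≤ INR) :
    (1/2) * Real.logb 2 (1 + SNR + INR + 2 * Real.sqrt (SNR * INR))
      + (1/2) * Real.logb 2 (1 + SNR / (1 + INR))
      - ((1/2) * Real.logb 2 (1 + INR + SNR) + (1/2) * Real.logb 2 (2 + SNR / INR) - 1)
      ≤ 3/2 := by
  have hI0 : (0:ℝ) < INR := lt_of_lt_of_le one_pos hI
  have hx : (0:ℝ) < 1 + INR + SNR := by positivity
  have hsqrt : 2 * Real.sqrt (SNR * INR) ≤ SNR + INR := by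
    have h := two_mul_le_add_sq (Real.sqrt SNR) (Real.sqrt INR)
    rw [Real.sq_sqrt hS, Real.sq_sqrt hI0.le] at h
    calc 2 * Real.sqrt (SNR * INR) = 2 * Real.sqrt SNR * Real.sqrt INR := by
          rw [Real.sqrt_mul hS]; ring
      _ ≤ SNR + INR := h
  have hsqnn : 0 ≤ Real.sqrt (SNR * INR) := Real.sqrt_nonneg _
  have h1 : Real.logb 2 (1 + SNR + INR + 2 * Real.sqrt (SNR * INR))
      ≤ 1 + Real.logb 2 (1 + INR + SNR) := by
    have hle : 1 + SNR + INR + 2 * Real.sqrt (SNR * INR) ≤ 2 * (1 + INR + SNR) := by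
      linarith
    have hpos : (0:ℝ) < 1 + SNR + INR + 2 * Real.sqrt (SNR * INR) := by positivity
    calc Real.logb 2 (1 + SNR + INR + 2 * Real.sqrt (SNR * INR))
        ≤ Real.logb 2 (2 * (1 + INR + SNR)) :=
          Real.logb_le_logb_of_le one_lt_two hpos hle
      _ = 1 + Real.logb 2 (1 + INR + SNR) := by
          rw [Real.logb_mul two_ne_zero hx.ne', Real.logb_self_eq_one one_lt_two]
  have h2 : Real.logb 2 (1 + SNR / (1 + INR)) ≤ Real.logb 2 (2 + SNR / INR) := by
    have hd : SNR / (1 + INR) ≤ SNR / INR :=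
      div_le_div_of_nonneg_left hS hI0 (by linarith)
    exact Real.logb_le_logb_of_le one_lt_two (by positivity) (by linarith)
  linarith
end

section
/- Let SNR, INR be positive reals with INR ≥ 1. Then log₂(1 + INR + SNR − (INR·SNR)/(1+INR)) − [log₂(1 + INR + SNR/INR) − 1] ≤ 1. -/
theorem weak_interference_gap_forward_HK2 (SNR INR : ℝ) (hS : 0 < SNR) (hI : 1 ≤ INR) :
    Real.logb 2 (1 + INR + SNR - (INR * SNR) / (1 + INR))
      - (Real.logb 2 (1 + INR + SNR / INR) - 1) ≤ 1 := by
  have hI0 : (0:ℝ) < INR := lt_of_lt_of_le one_pos hI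
  have h1I : (0:ℝ) < 1 + INR := by linarith
  have hApos : 0 < 1 + INR + SNR - (INR * SNR) / (1 + INR) := by
    have : (INR * SNR) / (1 + INR) < SNR := by
      rw [div_lt_iff₀ h1I]
      nlinarith
    linarith
  have hAB : 1 + INR + SNR - (INR * SNR) / (1 + INR) ≤ 1 + INR + SNR / INR := by
    have : SNR - (INR * SNR) / (1 + INR) ≤ SNR / INR := by
      rw [sub_le_iff_le_add, div_add_div _ _ hI0.ne' h1I.ne', le_div_iff₀ (by positivity)]
      nlinarith
    linarith
  have := Real.logb_le_logb_of_le (b := 2) one_lt_two hApos hAB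
  linarith
end

section
/- Let SNR, INR be positive reals with INR ≥ 1 and SNR ≥ INR³. Then log₂(1 + (√SNR + √INR)²/(1+INR)) − [log₂(1 + INR + SNR/INR) − 1] ≤ 2. -/
theorem weak_interference_gap_backward_HK2 (SNR INR : ℝ) (hS : 0 < SNR) (hI : 1 ≤ INR)
    (hreg : INR ^ 3 ≤ SNR) :
    Real.logb 2 (1 + (Real.sqrt SNR + Real.sqrt INR) ^ 2 / (1 + INR))
      - (Real.logb 2 (1 + INR + SNR / INR) - 1) ≤ 2 := by
  have hI0 : (0:ℝ) < INR := lt_of_lt_of_le one_pos hI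
  have h1I : (0:ℝ) < 1 + INR := by linarith
  have hsS := Real.sq_sqrt hS.le
  have hsI := Real.sq_sqrt (le_trans zero_le_one hI)
  have hsq : (Real.sqrt SNR + Real.sqrt INR) ^ 2 ≤ 2 * (SNR + INR) := by
    have h := sq_nonneg (Real.sqrt SNR - Real.sqrt INR)
    nlinarith [hsS, hsI]
  have hI2S : INR ^ 2 ≤ SNR := by nlinarith
  -- key: A ≤ 2 * B
  have hA : 1 + (Real.sqrt SNR + Real.sqrt INR) ^ 2 / (1 + INR)
      ≤ 2 * (1 + INR + SNR / INR) := by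
    have h1 : (Real.sqrt SNR + Real.sqrt INR) ^ 2 / (1 + INR) ≤ 2 * (SNR + INR) / (1 + INR) :=
      div_le_div_of_nonneg_right hsq h1I.le
    have h2 : 2 * (SNR + INR) / (1 + INR) ≤ 2 * (SNR / INR) := by
      rw [div_le_iff₀ h1I]
      have : SNR / INR * INR = SNR := div_mul_cancel₀ SNR hI0.ne'
      nlinarith [this]
    have h3 : SNR / INR > 0 := div_pos hS hI0
    linarith
  have hApos : (0:ℝ) < 1 + (Real.sqrt SNR + Real.sqrt INR) ^ 2 / (1 + INR) := by
    positivity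
  have hBpos : (0:ℝ) < 1 + INR + SNR / INR := by positivity
  have hlog : Real.logb 2 (1 + (Real.sqrt SNR + Real.sqrt INR) ^ 2 / (1 + INR))
      ≤ Real.logb 2 (2 * (1 + INR + SNR / INR)) :=
    by gcongr <;> norm_num
  have h2 : Real.logb 2 (2 * (1 + INR + SNR / INR))
      = 1 + Real.logb 2 (1 + INR + SNR / INR) := by
    rw [Real.logb_mul (by norm_num) hBpos.ne']
    norm_num [Real.logb_self_eq_one]
  linarith
end

section
/- Let SNR ≥ 0 and 0 ≤ INR < 1. Then (1/2)·log₂(1 + SNR + INR + 2√(SNR·INR)) + (1/2)·log₂(1 + SNR/(1+INR)) − log₂(1 + SNR/(1+INR)) ≤ 1. -/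
theorem small_INR_gap (SNR INR : ℝ) (hS : 0 ≤ SNR) (hI0 : 0 ≤ INR) (hI1 : INR < 1) :
    (1/2) * Real.logb 2 (1 + SNR + INR + 2 * Real.sqrt (SNR * INR))
      + (1/2) * Real.logb 2 (1 + SNR / (1 + INR))
      - Real.logb 2 (1 + SNR / (1 + INR)) ≤ 1 := by
  have h1I : (0:ℝ) < 1 + INR := by linarith
  set B : ℝ := 1 + SNR / (1 + INR) with hBdef
  have hB1 : 1 ≤ B := by
    have : 0 ≤ SNR / (1 + INR) := div_nonneg hS h1I.le
    rw [hBdef]; linarith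
  have hBpos : 0 < B := lt_of_lt_of_le one_pos hB1
  -- AM-GM: 2√(SNR·INR) ≤ SNR + INR
  have hsq : 2 * Real.sqrt (SNR * INR) ≤ SNR + INR := by
    nlinarith [sq_nonneg (Real.sqrt SNR - Real.sqrt INR), Real.sq_sqrt hS,
      Real.sq_sqrt hI0, Real.sqrt_mul hS INR, Real.sqrt_nonneg (SNR * INR),
      Real.sqrt_mul_self hS]
  have hA4B : 1 + SNR + INR + 2 * Real.sqrt (SNR * INR) ≤ 4 * B := by
    have h4B : 4 * B = 4 + 4 * (SNR / (1 + INR)) := by rw [hBdef]; ring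
    have hdiv : SNR / 2 ≤ SNR / (1 + INR) := by
      apply div_le_div_of_nonneg_left hS h1I; linarith
    rw [h4B]; linarith
  have hApos : 0 < 1 + SNR + INR + 2 * Real.sqrt (SNR * INR) := by
    have := Real.sqrt_nonneg (SNR * INR); linarith
  have hlog : Real.logb 2 (1 + SNR + INR + 2 * Real.sqrt (SNR * INR))
      ≤ Real.logb 2 (4 * B) := by
    exact Real.logb_le_logb_of_le (by norm_num) hApos hA4B
  have h4 : Real.logb 2 (4 * B) = 2 + Real.logb 2 B := by
    rw [Real.logb_mul (by norm_num) (ne_of_gt hBpos)]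
    rw [show (4:ℝ) = 2^(2:ℕ) by norm_num, Real.logb_pow, Real.logb_self_eq_one] <;> norm_num
  linarith
end

section
/- Let SNR, INR > 0 and consider f(λ, θ) = log₂(1 + INR + SNR + 2λ·cos θ·√(SNR·INR) − (SNR·INR + INR²·λ² + 2·√SNR·INR^{3/2}·λ·cos θ)/(1+INR)) for λ ∈ [0,1], θ ∈ [0, 2π]. If SNR ≤ INR³ then the maximum of f over this domain equals log₂(1 + INR + SNR/INR), attained at θ = 0 and λ = √(SNR·INR)/INR². -/
theorem backward_outer_bound_opt (SNR INR : ℝ) (hS : 0 < SNR) (hI : 0 < INR)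
    (hreg : SNR ≤ INR ^ 3) :
    let f : ℝ → ℝ → ℝ := fun l θ =>
      Real.logb 2 (1 + INR + SNR + 2 * l * Real.cos θ * Real.sqrt (SNR * INR)
        - (SNR * INR + INR ^ 2 * l ^ 2
            + 2 * Real.sqrt SNR * INR ^ ((3:ℝ)/2) * l * Real.cos θ) / (1 + INR))
    (∀ l ∈ Set.Icc (0:ℝ) 1, ∀ θ ∈ Set.Icc (0:ℝ) (2 * Real.pi),
        f l θ ≤ Real.logb 2 (1 + INR + SNR / INR)) ∧
      f (Real.sqrt (SNR * INR) / INR ^ 2) 0 = Real.logb 2 (1 + INR + SNR / INR) := by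
  intro f
  set s := Real.sqrt (SNR * INR) with hs
  have hs0 : 0 ≤ s := Real.sqrt_nonneg _
  have hs2 : s ^ 2 = SNR * INR := Real.sq_sqrt (by positivity)
  have hI1 : (0:ℝ) < 1 + INR := by linarith
  have hrp : INR ^ ((3:ℝ)/2) = INR * Real.sqrt INR := by
    have h32 : ((3:ℝ)/2) = 1 + 1/2 := by norm_num
    rw [h32, Real.rpow_add hI, Real.rpow_one, ← Real.sqrt_eq_rpow]
  have hargeq : ∀ l c : ℝ, 1 + INR + SNR + 2 * l * c * s
      - (SNR * INR + INR ^ 2 * l ^ 2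
          + 2 * Real.sqrt SNR * INR ^ ((3:ℝ)/2) * l * c) / (1 + INR)
      = 1 + INR + SNR + 2 * l * c * s
      - (SNR * INR + INR ^ 2 * l ^ 2 + 2 * s * INR * l * c) / (1 + INR) := by
    intro l c
    rw [hrp, hs, Real.sqrt_mul hS.le]
    ring_nf
  have h2s : 2 * s ≤ SNR + INR := by
    nlinarith [sq_nonneg (SNR - INR), sq_nonneg (SNR + INR - 2*s)]
  -- abbreviations for the divisions
  constructor
  · intro l hl θ hθ
    obtain ⟨hl0, hl1⟩ := hl
    have hc1 : Real.cos θ ≤ 1 := Real.cos_le_one θ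
    have hc0 : -1 ≤ Real.cos θ := Real.neg_one_le_cos θ
    set c := Real.cos θ
    show Real.logb 2 _ ≤ _
    rw [hargeq l c]
    set u := (SNR * INR + INR ^ 2 * l ^ 2 + 2 * s * INR * l * c) / (1 + INR) with hu
    have hu1 : u * (1 + INR) = SNR * INR + INR ^ 2 * l ^ 2 + 2 * s * INR * l * c :=
      div_mul_cancel₀ _ (ne_of_gt hI1)
    set v := SNR / INR with hv
    have hv1 : v * INR = SNR := div_mul_cancel₀ _ (ne_of_gt hI)
    apply Real.logb_le_logb_of_le one_lt_two
    · -- positivity: 1 ≤ argument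
      have hls : l * s ≤ s := by nlinarith
      have hl2 : l ^ 2 ≤ 1 := by nlinarith
      have hll : INR ^ 2 * l ^ 2 ≤ INR ^ 2 := by nlinarith [sq_nonneg INR]
      nlinarith [mul_nonneg (mul_nonneg hl0 hs0) (by linarith : (0:ℝ) ≤ 1 + c),
        mul_pos hI hI1, mul_nonneg hl0 hs0]
    · -- main inequality
      nlinarith [sq_nonneg (INR ^ 2 * l - s), mul_nonneg (mul_nonneg hl0 hs0)
        (by linarith : (0:ℝ) ≤ 1 - c), mul_pos hI hI1, mul_pos (mul_pos hI hI) hI1,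
        sq_nonneg INR, mul_pos hI hI]
  · show Real.logb 2 _ = _
    rw [Real.cos_zero]
    have harg : 1 + INR + SNR + 2 * (s / INR ^ 2) * 1 * s
        - (SNR * INR + INR ^ 2 * (s / INR ^ 2) ^ 2
            + 2 * Real.sqrt SNR * INR ^ ((3:ℝ)/2) * (s / INR ^ 2) * 1) / (1 + INR)
        = 1 + INR + SNR / INR := by
      rw [hargeq (s / INR ^ 2) 1]
      field_simp
      ring_nf
      linear_combination hs2
    rw [harg]
end
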